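/- arXiv:2110.00611 — 4 statements merged into one kernel-verified Lean document; each statement's English description precedes it below -/
import Mathlib

section
/- Let f: X → (-∞, +∞] and x ∈ dom f. If for every ε > 0 the Φ-ε-subdifferential ∂^ε_Φ f(x) is nonempty, then f(x) = f**_Φ(x). -/
/-- Φ-conjugate of `f`. -/
noncomputable def phiConj {X : Type*} (f : X → EReal) (φ : X → ℝ) : EReal :=
  ⨆ y : X, ((φ y : EReal) - f y)

/-- Φ-biconjugate of `f`. -/
noncomputable def phiBiconj {X : Type*} (Φ : Set (X → ℝ)) (f : X → EReal) (x : X) : EReal :=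
  ⨆ φ ∈ Φ, ((φ x : EReal) - phiConj f φ)

/-- `φ ∈ Φ` is a Φ-ε-subgradient of `f` at `x`. -/
def IsEpsSubgradient {X : Type*} (Φ : Set (X → ℝ)) (f : X → EReal) (x : X)
    (ε : ℝ) (φ : X → ℝ) : Prop :=
  φ ∈ Φ ∧ ∀ y : X, f y - f x ≥ (φ y : EReal) - (φ x : EReal) - (ε : EReal)

/-- If for every `ε > 0` the Φ-ε-subdifferential of `f` at `x ∈ dom f` is
nonempty, then `f(x) = f**_Φ(x)`. -/
theorem eq_biconjugate_of_eps_subdifferential_nonempty {X : Type*}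
    (Φ : Set (X → ℝ)) (f : X → EReal) (hf : ∀ y, f y ≠ ⊥)
    (x : X) (hx : f x ≠ ⊤)
    (h : ∀ ε : ℝ, 0 < ε → ∃ φ : X → ℝ, IsEpsSubgradient Φ f x ε φ) :
    f x = phiBiconj Φ f x := by
  obtain ⟨r, hr⟩ : ∃ r : ℝ, f x = (r : EReal) := by
    lift f x to ℝ using ⟨hx, hf x⟩ with r; exact ⟨r, rfl⟩
  -- upper bound: biconj ≤ f x
  have hub : phiBiconj Φ f x ≤ f x := by
    rw [phiBiconj]
    refine iSup₂_le fun φ hφ => ?_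
    have h1 : ((φ x : ℝ) : EReal) - (r : EReal) ≤ phiConj f φ := by
      have := le_iSup (fun y => ((φ y : EReal) - f y)) x
      rw [hr] at this
      exact_mod_cast this
    calc ((φ x : ℝ) : EReal) - phiConj f φ
        ≤ (φ x : EReal) - ((φ x : EReal) - (r : EReal)) :=
          EReal.sub_le_sub le_rfl h1
      _ = f x := by
          rw [hr]; norm_cast; ring
  -- lower bound
  have hlb : f x ≤ phiBiconj Φ f x := by
    rw [hr]
    by_contra hc
    push_neg at hc
    -- phiBiconj < r; since also ≥ r - ε for all ε...
    have key : ∀ ε : ℝ, 0 < ε → ((r - ε : ℝ) : EReal) ≤ phiBiconj Φ f x := by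
      intro ε hε
      obtain ⟨φ, hφΦ, hφ⟩ := h ε hε
      have hconj : phiConj f φ ≤ ((φ x - r + ε : ℝ) : EReal) := by
        rw [phiConj]
        refine iSup_le fun y => ?_
        have := hφ y
        rw [hr] at this
        rcases eq_or_ne (f y) ⊤ with ht | ht
        · rw [ht, EReal.sub_top]; exact bot_le
        · lift f y to ℝ using ⟨ht, hf y⟩ with s
          rw [ge_iff_le, ← EReal.coe_sub, ← EReal.coe_sub, ← EReal.coe_sub,
            EReal.coe_le_coe_iff] at this
          rw [← EReal.coe_sub, EReal.coe_le_coe_iff]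
          linarith
      have h2 : ((r - ε : ℝ) : EReal) ≤ (φ x : EReal) - phiConj f φ := by
        calc ((r - ε : ℝ) : EReal) = (φ x : EReal) - ((φ x - r + ε : ℝ) : EReal) := by
              norm_cast; ring
          _ ≤ (φ x : EReal) - phiConj f φ := EReal.sub_le_sub le_rfl hconj
      exact h2.trans (le_iSup₂_of_le φ hφΦ le_rfl)
    -- derive contradiction
    have hbot : phiBiconj Φ f x ≠ ⊥ := by
      intro hb
      have := key 1 one_pos
      rw [hb] at this
      exact (EReal.coe_ne_bot _) (le_bot_iff.mp this)
    have htop : phiBiconj Φ f x ≠ ⊤ := by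
      intro ht; rw [ht] at hc; exact (not_top_lt hc)
    lift phiBiconj Φ f x to ℝ using ⟨htop, hbot⟩ with b
    rw [EReal.coe_lt_coe_iff] at hc
    have : ∀ ε : ℝ, 0 < ε → r - ε ≤ b := fun ε hε => by
      have := key ε hε; exact_mod_cast this
    have : r ≤ b := le_of_forall_sub_le this
    linarith
  rw [hr] at hub hlb ⊢
  exact le_antisymm hlb hub
end

section
/- Let X be a set, α ∈ ℝ, and φ₁, φ₂: X → ℝ. Then φ₁ and φ₂ have the intersection property at level α (for all t ∈ [0,1], either [tφ₁ + (1−t)φ₂ < α] ∩ [φ₁ < α] = ∅ or [tφ₁ + (1−t)φ₂ < α] ∩ [φ₂ < α] = ∅) if and only if there exists t₀ ∈ [0,1] such that t₀φ₁(x) + (1−t₀)φ₂(x) ≥ α for all x ∈ X. -/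
/-- `φ₁` and `φ₂` have the intersection property on `X` at level `α`. -/
def IntersectionProperty {X : Type*} (φ₁ φ₂ : X → ℝ) (α : ℝ) : Prop :=
  ∀ t : ℝ, t ∈ Set.Icc (0 : ℝ) 1 →
    ({x : X | t * φ₁ x + (1 - t) * φ₂ x < α} ∩ {x : X | φ₁ x < α} = ∅ ∨
     {x : X | t * φ₁ x + (1 - t) * φ₂ x < α} ∩ {x : X | φ₂ x < α} = ∅)

/-- An affine function of `s` which is `< α` at two points is `< α` in between. -/
lemma affine_lt_aux {a b α s₁ s₂ s : ℝ} (h1 : s₁ * a + (1 - s₁) * b < α)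
    (h2 : s₂ * a + (1 - s₂) * b < α) (hl : s₁ ≤ s) (hr : s ≤ s₂) :
    s * a + (1 - s) * b < α := by
  rcases le_total a b with hab | hab
  · nlinarith [mul_nonneg (sub_nonneg.2 hl) (sub_nonneg.2 hab)]
  · nlinarith [mul_nonneg (sub_nonneg.2 hr) (sub_nonneg.2 hab)]

/-- `φ₁, φ₂` have the intersection property at level `α` iff some convex
combination of them is ≥ `α` everywhere. -/
theorem intersection_property_iff_convex_combination {X : Type*}
    (α : ℝ) (φ₁ φ₂ : X → ℝ) :
    IntersectionProperty φ₁ φ₂ α ↔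
      ∃ t₀ ∈ Set.Icc (0 : ℝ) 1, ∀ x : X, t₀ * φ₁ x + (1 - t₀) * φ₂ x ≥ α := by
  constructor
  · intro h
    by_cases hmeet : ∃ x, φ₁ x < α ∧ φ₂ x < α
    · -- the two strict sublevel sets meet; then t = 1 forces φ₁ ≥ α everywhere
      obtain ⟨x₀, hx1, hx2⟩ := hmeet
      rcases h 1 (by norm_num) with h1 | h1
      · refine ⟨1, by norm_num, fun x => ?_⟩
        by_contra hx
        push_neg at hx
        have hmem : x ∈ ({x : X | (1:ℝ) * φ₁ x + (1 - 1) * φ₂ x < α} ∩ {x : X | φ₁ x < α}) := by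
          constructor
          · exact hx
          · show φ₁ x < α
            linarith
        rw [h1] at hmem
        exact hmem
      · exfalso
        have hmem : x₀ ∈ ({x : X | (1:ℝ) * φ₁ x + (1 - 1) * φ₂ x < α} ∩ {x : X | φ₂ x < α}) := by
          constructor
          · show (1:ℝ) * φ₁ x₀ + (1 - 1) * φ₂ x₀ < α; linarith
          · exact hx2
        rw [h1] at hmem
        exact hmem
    · -- disjoint case
      push_neg at hmeet
      set T : Set ℝ := {t : ℝ | t ∈ Set.Icc (0:ℝ) 1 ∧
        ∀ x, t * φ₁ x + (1 - t) * φ₂ x < α → ¬ (φ₁ x < α)} with hT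
      have h0T : (0:ℝ) ∈ T := by
        refine ⟨by norm_num, fun x hx hx1 => ?_⟩
        have hx2 : φ₂ x < α := by linarith
        exact absurd hx2 (not_lt.2 (hmeet x hx1))
      have hbdd : BddAbove T := ⟨1, fun t ht => ht.1.2⟩
      set t₀ : ℝ := sSup T with ht₀def
      have ht₀0 : 0 ≤ t₀ := le_csSup hbdd h0T
      have ht₀1 : t₀ ≤ 1 := csSup_le ⟨0, h0T⟩ (fun t ht => ht.1.2)
      refine ⟨t₀, ⟨ht₀0, ht₀1⟩, fun x => ?_⟩
      by_contra hx
      push_neg at hx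
      set a := φ₁ x with ha
      set b := φ₂ x with hb
      have hor : a < α ∨ b < α := by
        by_contra hc
        push_neg at hc
        nlinarith [hc.1, hc.2]
      -- continuity bound: ε
      set ε : ℝ := (α - (t₀ * a + (1 - t₀) * b)) / (|a - b| + 1) with hε
      have habs0 : (0:ℝ) < |a - b| + 1 := by positivity
      have hεpos : 0 < ε := by
        apply div_pos; linarith; exact habs0
      have hkey : ∀ t, t₀ - ε ≤ t → t ≤ t₀ + ε → t * a + (1 - t) * b < α := by
        intro t h1 h2
        have e1 : a - b ≤ |a - b| := le_abs_self _
        have e2 : -(|a - b|) ≤ a - b := neg_abs_le _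
        have hεle : ε * (|a - b| + 1) = α - (t₀ * a + (1 - t₀) * b) := by
          rw [hε]; exact div_mul_cancel₀ _ habs0.ne'
        rcases le_total t t₀ with hc | hc
        · nlinarith [mul_le_mul_of_nonneg_left e1 (sub_nonneg.2 hc),
            mul_le_mul_of_nonneg_right (sub_le_iff_le_add'.2 h2) (le_of_lt habs0)]
        · nlinarith [mul_le_mul_of_nonneg_left e2 (sub_nonneg.2 hc)]
      rcases hor with hc1 | hc2
      · -- φ₁ x < α : every element of T is ≤ t₀ - ε, contradicting sup
        have hub : ∀ t ∈ T, t ≤ t₀ - ε := by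
          intro t ht
          by_contra hcon
          push_neg at hcon
          have hlt : t * a + (1 - t) * b < α := by
            rcases le_total t t₀ with hc | hc
            · exact hkey t hcon.le (by linarith)
            · exact affine_lt_aux hx (by simpa using hc1 : (1:ℝ) * a + (1 - 1) * b < α) hc ht.1.2
          exact ht.2 x hlt hc1
        have : t₀ ≤ t₀ - ε := csSup_le ⟨0, h0T⟩ hub
        linarith
      · -- φ₂ x < α : some t₁ > t₀ belongs to T, contradicting sup
        have ht₀lt1 : t₀ < 1 := by
          rcases lt_or_eq_of_le ht₀1 with h' | h'
          · exact h'
          · exfalso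
            rw [h'] at hx
            have : a < α := by linarith
            exact absurd hc2 (not_lt.2 (hmeet x this))
        set t₁ : ℝ := min 1 (t₀ + ε) with ht₁def
        have ht₁gt : t₀ < t₁ := lt_min ht₀lt1 (by linarith)
        have ht₁le1 : t₁ ≤ 1 := min_le_left _ _
        have ht₁0 : 0 ≤ t₁ := by positivity
        have ht₁lt : t₁ * a + (1 - t₁) * b < α :=
          hkey t₁ (by linarith) (min_le_right _ _)
        have hx2ne : x ∈ ({x : X | t₁ * φ₁ x + (1 - t₁) * φ₂ x < α} ∩ {x : X | φ₂ x < α}) :=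
          ⟨ht₁lt, hc2⟩
        rcases h t₁ ⟨ht₁0, ht₁le1⟩ with h' | h'
        · have ht₁T : t₁ ∈ T := by
            refine ⟨⟨ht₁0, ht₁le1⟩, fun y hy hy1 => ?_⟩
            have : y ∈ ({x : X | t₁ * φ₁ x + (1 - t₁) * φ₂ x < α} ∩ {x : X | φ₁ x < α}) :=
              ⟨hy, hy1⟩
            rw [h'] at this
            exact this
          have : t₁ ≤ t₀ := le_csSup hbdd ht₁T
          linarith
        · rw [h'] at hx2ne
          exact hx2ne
  · -- easy direction
    rintro ⟨t₀, ⟨ht₀0, ht₀1⟩, hge⟩ t ⟨ht0, ht1⟩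
    by_contra hcon
    push_neg at hcon
    obtain ⟨h1ne, h2ne⟩ := hcon
    obtain ⟨x, hxA, hx1⟩ := h1ne
    obtain ⟨y, hyA, hy2⟩ := h2ne
    have hxA' : t * φ₁ x + (1 - t) * φ₂ x < α := hxA
    have hyA' : t * φ₁ y + (1 - t) * φ₂ y < α := hyA
    have hx1' : φ₁ x < α := hx1
    have hy2' : φ₂ y < α := hy2
    have htlt : t₀ < t := by
      by_contra hc
      push_neg at hc
      have := affine_lt_aux hxA' (by simpa using hx1' : (1:ℝ) * φ₁ x + (1 - 1) * φ₂ x < α) hc ht₀1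
      linarith [hge x]
    have htgt : t < t₀ := by
      by_contra hc
      push_neg at hc
      have := affine_lt_aux (by simpa using hy2' : (0:ℝ) * φ₁ y + (1 - 0) * φ₂ y < α) hyA' ht₀0 hc
      linarith [hge y]
    linarith
end

section
/- Let Φ be symmetric (Φ = −Φ) and f, g: X → (-∞,+∞] be Φ-convex. For x* ∈ X and φ* ∈ Φ, if −φ* ∈ ∂_Φ f(x*) and x* ∈ ∂_X g*_Φ(φ*), then f(x*) + g(x*) = −f*_Φ(−φ*) − g*_Φ(φ*) and this common value equals sup_{φ∈Φ}(−f*_Φ(−φ) − g*_Φ(φ)); i.e., x* solves the primal problem and φ* solves the symmetric conjugate dual. -/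
private lemma ereal_key {a : ℝ} {b c : EReal} (h : (a : EReal) - b ≤ c) :
    (a : EReal) - c ≤ b := by
  induction b using EReal.rec with
  | bot =>
    rw [EReal.coe_sub_bot, top_le_iff] at h
    rw [h, EReal.sub_top]
  | top => exact le_top
  | coe b =>
    induction c using EReal.rec with
    | bot =>
      exfalso
      rw [le_bot_iff, ← EReal.coe_sub] at h
      exact EReal.coe_ne_bot _ h
    | top => rw [EReal.sub_top]; exact bot_le
    | coe c =>
      rw [← EReal.coe_sub, EReal.coe_le_coe_iff] at h ⊢
      linarith

/-- Sufficiency of the Φ-KKT conditions: if `−φ* ∈ ∂_Φ f(x*)` and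
`x* ∈ ∂_X g*_Φ(φ*)`, then `x*` solves the primal problem and `φ*` solves the
symmetric conjugate dual, with equal optimal values. -/
theorem kkt_sufficient {X : Type*} [AddCommGroup X] [Module ℝ X]
    (Φ : Set (X → ℝ)) (hsym : ∀ φ ∈ Φ, -φ ∈ Φ)
    (f g : X → EReal)
    (hfconv : ∀ x : X, f x = phiBiconj Φ f x)
    (hgconv : ∀ x : X, g x = phiBiconj Φ g x)
    (xstar : X) (φstar : X → ℝ) (hφstar : φstar ∈ Φ)
    (hkkt1 : ∀ x : X, f x - f xstar ≥ ((-φstar) x : EReal) - ((-φstar) xstar : EReal))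
    (hkkt2 : ∀ φ ∈ Φ, phiConj g φ - phiConj g φstar ≥ (φ xstar : EReal) - (φstar xstar : EReal)) :
    f xstar + g xstar = -(phiConj f (-φstar)) - phiConj g φstar ∧
    f xstar + g xstar = ⨅ x : X, f x + g x ∧
    (-(phiConj f (-φstar)) - phiConj g φstar : EReal) =
      ⨆ φ ∈ Φ, (-(phiConj f (-φ)) - phiConj g φ) := by
  -- Fenchel–Young inequality
  have hFY : ∀ (h : X → EReal) (φ : X → ℝ) (x : X), (φ x : EReal) - h x ≤ phiConj h φ :=
    fun h φ x => le_iSup (fun y => ((φ y : EReal) - h y)) x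
  -- f xstar is real
  have h0 := hkkt1 xstar
  rw [← EReal.coe_sub, sub_self] at h0
  obtain ⟨a, ha⟩ : ∃ a : ℝ, f xstar = (a : EReal) := by
    generalize f xstar = u at h0 ⊢
    induction u using EReal.rec with
    | bot => rw [EReal.bot_sub] at h0; exact absurd h0 (by simp)
    | top => rw [EReal.sub_top] at h0; exact absurd h0 (by simp)
    | coe a => exact ⟨a, rfl⟩
  -- phiConj g φstar is real
  have h2 := hkkt2 φstar hφstar
  rw [← EReal.coe_sub, sub_self] at h2
  obtain ⟨b, hb⟩ : ∃ b : ℝ, phiConj g φstar = (b : EReal) := by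
    generalize phiConj g φstar = u at h2 ⊢
    induction u using EReal.rec with
    | bot => rw [EReal.bot_sub] at h2; exact absurd h2 (by simp)
    | top => rw [EReal.sub_top] at h2; exact absurd h2 (by simp)
    | coe b => exact ⟨b, rfl⟩
  -- g xstar = φstar xstar - b
  have hgx : g xstar = ((φstar xstar - b : ℝ) : EReal) := by
    apply le_antisymm
    · rw [hgconv xstar]
      apply iSup₂_le
      intro φ hφ
      have h3 := hkkt2 φ hφ
      rw [hb] at h3
      generalize phiConj g φ = c at h3 ⊢
      induction c using EReal.rec with
      | bot => rw [EReal.bot_sub] at h3; exact absurd h3 (by simp [← EReal.coe_sub])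
      | top => rw [EReal.sub_top]; exact bot_le
      | coe c =>
        norm_cast at h3 ⊢
        linarith
    · have := le_iSup₂ (f := fun φ (_ : φ ∈ Φ) => ((φ xstar : EReal) - phiConj g φ)) φstar hφstar
      rw [hb, ← EReal.coe_sub] at this
      rw [hgconv xstar, phiBiconj]
      exact this
  -- phiConj f (-φstar) = -(φstar xstar) - a
  have hF : phiConj f (-φstar) = ((-(φstar xstar) - a : ℝ) : EReal) := by
    apply le_antisymm
    · apply iSup_le
      intro x
      have h3 := hkkt1 x
      rw [ha] at h3
      simp only [Pi.neg_apply, EReal.coe_neg] at h3 ⊢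
      generalize f x = c at h3 ⊢
      induction c using EReal.rec with
      | bot => rw [EReal.bot_sub] at h3; exact absurd h3 (by simp [← EReal.coe_sub,
          ← EReal.coe_neg])
      | top => rw [EReal.sub_top]; exact bot_le
      | coe c =>
        norm_cast at h3 ⊢
        linarith
    · have := hFY f (-φstar) xstar
      rw [ha] at this
      simp only [Pi.neg_apply, EReal.coe_neg] at this ⊢
      rw [← EReal.coe_neg, ← EReal.coe_sub] at this
      exact this
  -- weak duality: pointwise lower bound for the primal
  have hlow : ∀ x : X, ((a + (φstar xstar - b) : ℝ) : EReal) ≤ f x + g x := by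
    intro x
    have hf : ((-(φstar x) - (-(φstar xstar) - a) : ℝ) : EReal) ≤ f x := by
      have h4 := hFY f (-φstar) x
      rw [hF] at h4
      simp only [Pi.neg_apply, EReal.coe_neg] at h4
      rw [← EReal.coe_neg] at h4
      have := ereal_key h4
      rwa [← EReal.coe_sub] at this
    have hg : ((φstar x - b : ℝ) : EReal) ≤ g x := by
      have h4 := hFY g φstar x
      rw [hb] at h4
      have := ereal_key h4
      rwa [← EReal.coe_sub] at this
    have h5 := add_le_add hf hg
    rw [← EReal.coe_add] at h5
    have heq : a + (φstar xstar - b) = (-(φstar x) - (-(φstar xstar) - a)) + (φstar x - b) := by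
      ring
    rw [heq]
    exact h5
  have heq1 : f xstar + g xstar = -(phiConj f (-φstar)) - phiConj g φstar := by
    rw [ha, hgx, hF, hb, ← EReal.coe_neg, ← EReal.coe_sub, ← EReal.coe_add,
      EReal.coe_eq_coe_iff]
    ring
  refine ⟨heq1, ?_, ?_⟩
  · apply le_antisymm
    · apply le_iInf
      intro x
      have := hlow x
      rw [ha, hgx, ← EReal.coe_add]
      exact this
    · exact iInf_le _ xstar
  · apply le_antisymm
    · rw [← heq1, ha, hgx, ← EReal.coe_add]
      have := le_iSup₂ (f := fun φ (_ : φ ∈ Φ) => (-(phiConj f (-φ)) - phiConj g φ)) φstar hφstar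
      rw [hF, hb, ← EReal.coe_neg, ← EReal.coe_sub] at this
      calc ((a + (φstar xstar - b) : ℝ) : EReal)
          = ((-(-(φstar xstar) - a) - b : ℝ) : EReal) := by rw [EReal.coe_eq_coe_iff]; ring
        _ ≤ _ := this
    · apply iSup₂_le
      intro φ hφ
      have hf : -(phiConj f (-φ)) ≤ ((φ xstar + a : ℝ) : EReal) := by
        have h4 := hFY f (-φ) xstar
        rw [ha] at h4
        simp only [Pi.neg_apply, EReal.coe_neg] at h4
        rw [← EReal.coe_neg, ← EReal.coe_sub] at h4
        calc -(phiConj f (-φ)) ≤ -((-(φ xstar) - a : ℝ) : EReal) := by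
              exact EReal.neg_le_neg_iff.mpr h4
          _ = ((φ xstar + a : ℝ) : EReal) := by rw [← EReal.coe_neg, EReal.coe_eq_coe_iff]; ring
      have hg : -(phiConj g φ) ≤ ((-(φ xstar) + (φstar xstar - b) : ℝ) : EReal) := by
        have h4 := hFY g φ xstar
        rw [hgx, ← EReal.coe_sub] at h4
        calc -(phiConj g φ) ≤ -((φ xstar - (φstar xstar - b) : ℝ) : EReal) :=
              EReal.neg_le_neg_iff.mpr h4
          _ = _ := by rw [← EReal.coe_neg, EReal.coe_eq_coe_iff]; ring
      calc -(phiConj f (-φ)) - phiConj g φ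
          ≤ ((φ xstar + a : ℝ) : EReal) + ((-(φ xstar) + (φstar xstar - b) : ℝ) : EReal) :=
            add_le_add hf hg
        _ = -(phiConj f (-φstar)) - phiConj g φstar := by
            rw [hF, hb, ← EReal.coe_neg, ← EReal.coe_sub, ← EReal.coe_add,
              EReal.coe_eq_coe_iff]
            ring
end

section
/- In the example f(x) = 2x², g(x) = −x² on ℝ with elementary functions Φ_lsc = {x ↦ −ax² + bx + c : a ≥ 0}, the infimal-convolution dual value sup_{b∈ℝ}(−f*(0,−b) − g*(0,b)) equals −∞, while the Φ_lsc-conjugate dual value sup_{(a,b), a≥0}(−(f − a‖·‖²)*(0,−b) − g*(a,b)) equals 0 = inf_{x∈ℝ}(f(x)+g(x)); hence there is zero duality gap for the conjugate dual but not for the infimal-convolution dual. -/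
/-- `f(x) = 2x²`. -/
noncomputable def fEx (x : ℝ) : ℝ := 2 * x ^ 2

/-- `g(x) = −x²`. -/
noncomputable def gEx (x : ℝ) : ℝ := -x ^ 2

/-- Conjugate `h*(a,b) := sup_x (−ax² + bx − h(x))`. -/
noncomputable def lscConj (h : ℝ → ℝ) (a b : ℝ) : EReal :=
  ⨆ x : ℝ, ((-a * x ^ 2 + b * x - h x : ℝ) : EReal)

lemma conj_g_top (b : ℝ) : lscConj gEx 0 b = ⊤ := by
  rw [lscConj, iSup_eq_top]
  intro c hc
  induction c using EReal.rec with
  | bot => exact ⟨0, EReal.bot_lt_coe _⟩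
  | top => exact absurd hc (lt_irrefl _)
  | coe r =>
    refine ⟨|b| + |r| + 1, ?_⟩
    rw [EReal.coe_lt_coe_iff]
    have h1 := abs_nonneg b
    have h2 := abs_nonneg r
    have h3 := le_abs_self r
    have h4 := neg_abs_le b
    simp only [gEx]
    nlinarith [mul_nonneg h1 h2, sq_nonneg (|b| + |r|)]

lemma conj_nonneg (h : ℝ → ℝ) (a b : ℝ) (h0 : h 0 = 0) : (0 : EReal) ≤ lscConj h a b := by
  refine le_iSup_of_le 0 ?_
  rw [h0]
  norm_num

/-- In the example `f(x)=2x²`, `g(x)=−x²`: the infimal-convolution dual value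
is `−∞`, while the Φ_lsc-conjugate dual value equals `0`, which is the primal
value `inf (f+g) = 0`; so zero duality gap holds for the conjugate dual but
fails for the infimal-convolution dual. -/
theorem example_zero_gap_CD_not_ICD :
    (⨆ b : ℝ, (-(lscConj fEx 0 (-b)) - lscConj gEx 0 b)) = ⊥ ∧
    (⨆ a ∈ {a : ℝ | 0 ≤ a}, ⨆ b : ℝ,
      (-(lscConj (fun x => fEx x - a * x ^ 2) 0 (-b)) - lscConj gEx a b)) = 0 ∧
    (⨅ x : ℝ, ((fEx x + gEx x : ℝ) : EReal)) = 0 := by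
  refine ⟨?_, ?_, ?_⟩
  · simp only [conj_g_top, sub_eq_add_neg]
    simp
  · apply le_antisymm
    · refine iSup₂_le fun a ha => iSup_le fun b => ?_
      have h1 : (0 : EReal) ≤ lscConj (fun x => fEx x - a * x ^ 2) 0 (-b) :=
        conj_nonneg _ _ _ (by simp [fEx])
      have h2 : (0 : EReal) ≤ lscConj gEx a b := conj_nonneg _ _ _ (by simp [gEx])
      rw [sub_eq_add_neg]
      have n1 : -(lscConj (fun x => fEx x - a * x ^ 2) 0 (-b)) ≤ 0 := by
        exact (EReal.neg_le_neg_iff.mpr h1).trans_eq neg_zero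
      have n2 : -(lscConj gEx a b) ≤ 0 := by
        exact (EReal.neg_le_neg_iff.mpr h2).trans_eq neg_zero
      calc _ ≤ (0 : EReal) + 0 := add_le_add n1 n2
        _ = 0 := by simp
    · have key : -(lscConj (fun x => fEx x - 1 * x ^ 2) 0 (-0)) - lscConj gEx 1 0 = 0 := by
        have c1 : lscConj (fun x => fEx x - 1 * x ^ 2) 0 (-0) = 0 := by
          apply le_antisymm
          · refine iSup_le fun x => ?_
            rw [EReal.coe_nonpos]
            simp [fEx]; nlinarith [sq_nonneg x]
          · exact conj_nonneg _ _ _ (by simp [fEx])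
        have c2 : lscConj gEx 1 0 = 0 := by
          apply le_antisymm
          · refine iSup_le fun x => ?_
            rw [EReal.coe_nonpos]
            simp [gEx]
          · exact conj_nonneg _ _ _ (by simp [gEx])
        rw [c1, c2]; simp
      calc (0 : EReal) = _ := key.symm
        _ ≤ ⨆ b : ℝ, (-(lscConj (fun x => fEx x - 1 * x ^ 2) 0 (-b)) - lscConj gEx 1 b) :=
            le_iSup (fun b : ℝ => -(lscConj (fun x => fEx x - 1 * x ^ 2) 0 (-b)) - lscConj gEx 1 b) 0
        _ ≤ _ := le_iSup₂ (f := fun a (_ : a ∈ {a : ℝ | 0 ≤ a}) => ⨆ b : ℝ,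
            (-(lscConj (fun x => fEx x - a * x ^ 2) 0 (-b)) - lscConj gEx a b)) 1 (by simp)
  · apply le_antisymm
    · have := iInf_le (fun x : ℝ => ((fEx x + gEx x : ℝ) : EReal)) 0
      simpa [fEx, gEx] using this
    · refine le_iInf fun x => ?_
      have : (0:ℝ) ≤ fEx x + gEx x := by simp [fEx, gEx]; nlinarith [sq_nonneg x]
      exact_mod_cast EReal.coe_le_coe_iff.mpr this
end
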